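/- Let (X, τ, 𝔐, μ) be a topological measure space with μ σ-finite. Then μ is Borel regular if and only if every measurable function has a Borel representative: for every 𝔐-measurable u: X → [-∞,∞] there exist a Borel set N with μ(N) = 0 and a Borel measurable function f: X → [-∞,∞] with f = u on X \ N. -/

import Mathlib

open MeasureTheory Set Topology
open scoped ENNReal NNReal

-- aux lemma: Borel cover with null difference
lemma aux_cover {X : Type*} [TopologicalSpace X] [MeasurableSpace X]
    (hle : borel X ≤ ‹MeasurableSpace X›) (μ : Measure X)
    (hsf : ∃ A : ℕ → Set X, (∀ n, MeasurableSet (A n)) ∧ (⋃ n, A n) = Set.univ ∧ ∀ n, μ (A n) < ⊤)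
    (hreg : ∀ E : Set X, MeasurableSet E →
        ∃ B : Set X, MeasurableSet[borel X] B ∧ E ⊆ B ∧ μ B = μ E)
    (E : Set X) (hE : MeasurableSet E) :
    ∃ B : Set X, MeasurableSet[borel X] B ∧ E ⊆ B ∧ μ (B \ E) = 0 := by
  obtain ⟨A, hA, hAuniv, hAfin⟩ := hsf
  choose B hBm hBsub hBeq using fun n => hreg (E ∩ A n) (hE.inter (hA n))
  refine ⟨⋃ n, B n, MeasurableSet.iUnion hBm, ?_, ?_⟩
  · intro x hx
    have : x ∈ ⋃ n, A n := hAuniv ▸ mem_univ x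
    obtain ⟨n, hn⟩ := mem_iUnion.1 this
    exact mem_iUnion.2 ⟨n, hBsub n ⟨hx, hn⟩⟩
  · have hnull : ∀ n, μ (B n \ (E ∩ A n)) = 0 := by
      intro n
      have h1 : μ (B n \ (E ∩ A n)) = μ (B n) - μ (E ∩ A n) :=
        measure_diff (hBsub n) ((hE.inter (hA n)).nullMeasurableSet)
          (by
            have : μ (E ∩ A n) ≤ μ (A n) := measure_mono inter_subset_right
            exact (this.trans_lt (hAfin n)).ne)
      rw [h1, hBeq n, tsub_self]
    have hsub : (⋃ n, B n) \ E ⊆ ⋃ n, (B n \ (E ∩ A n)) := by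
      intro x hx
      obtain ⟨n, hn⟩ := mem_iUnion.1 hx.1
      exact mem_iUnion.2 ⟨n, hn, fun h => hx.2 h.1⟩
    exact le_antisymm ((measure_mono hsub).trans (measure_iUnion_null hnull).le) zero_le

theorem stmt16 {X : Type*} [TopologicalSpace X] [MeasurableSpace X]
    (hBorel : ∀ s : Set X, IsOpen s → MeasurableSet s)
    (μ : Measure X)
    (hsf : ∃ A : ℕ → Set X, (∀ n, MeasurableSet (A n)) ∧ (⋃ n, A n) = Set.univ ∧ ∀ n, μ (A n) < ⊤) :
    (∀ E : Set X, MeasurableSet E →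
        ∃ B : Set X, MeasurableSet[borel X] B ∧ E ⊆ B ∧ μ B = μ E) ↔
    (∀ u : X → EReal, Measurable u →
        ∃ (N : Set X) (f : X → EReal), MeasurableSet[borel X] N ∧ μ N = 0 ∧
          Measurable[borel X] f ∧ ∀ x ∉ N, f x = u x) := by
  have hle : borel X ≤ ‹MeasurableSpace X› := by
    rw [borel]
    exact MeasurableSpace.generateFrom_le hBorel
  classical
  constructor
  · -- forward
    intro hreg u hu
    -- E q = u ⁻¹' (Iio q)
    set E : ℚ → Set X := fun q => u ⁻¹' (Iio ((q : ℝ) : EReal)) with hEdef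
    have hEm : ∀ q, MeasurableSet (E q) := fun q => hu measurableSet_Iio
    choose B hBm hBsub hBnull using fun q => aux_cover hle μ hsf hreg (E q) (hEm q)
    -- null set
    set N0 : Set X := ⋃ q : ℚ, (B q \ E q) with hN0def
    have hN0m : MeasurableSet N0 :=
      MeasurableSet.iUnion fun q => (hle _ (hBm q)).diff (hEm q)
    have hN0null : μ N0 = 0 := measure_iUnion_null hBnull
    obtain ⟨N, hNm, hNsub, hNeq⟩ := hreg N0 hN0m
    refine ⟨N, fun x => ⨅ q : ℚ, if x ∈ B q then ((q : ℝ) : EReal) else ⊤,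
      hNm, hNeq.trans hN0null, ?_, ?_⟩
    · exact Measurable.iInf fun q =>
        Measurable.ite (hBm q) measurable_const measurable_const
    · intro x hxN
      have hx : ∀ q : ℚ, x ∈ B q ↔ u x < ((q : ℝ) : EReal) := by
        intro q
        classical
  constructor
        · intro hxB
          by_contra h
          exact hxN (hNsub (mem_iUnion.2 ⟨q, hxB, h⟩))
        · exact fun h => hBsub q h
      apply le_antisymm
      · by_contra h
        push_neg at h
        obtain ⟨q, hq1, hq2⟩ := EReal.exists_rat_btwn_of_lt h
        have : (⨅ q : ℚ, if x ∈ B q then ((q : ℝ) : EReal) else ⊤) ≤ ((q : ℝ) : EReal) := by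
          have := iInf_le (fun q : ℚ => if x ∈ B q then ((q : ℝ) : EReal) else ⊤) q
          rwa [if_pos ((hx q).2 hq1)] at this
        exact absurd (this.trans_lt hq2) (lt_irrefl _)
      · refine le_iInf fun q => ?_
        by_cases hxB : x ∈ B q
        · rw [if_pos hxB]
          exact ((hx q).1 hxB).le
        · rw [if_neg hxB]; exact le_top
  · -- backward
    intro h E hE
    obtain ⟨N, f, hNm, hNnull, hfm, hfe⟩ :=
      h (E.indicator fun _ => (1 : EReal)) (measurable_const.indicator hE)
    have hEB : E ⊆ f ⁻¹' {1} ∪ N := by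
      intro x hx
      by_cases hxN : x ∈ N
      · exact Or.inr hxN
      · left
        have := hfe x hxN
        rw [indicator_of_mem hx] at this
        exact this
    refine ⟨f ⁻¹' {1} ∪ N, (hfm (measurableSet_singleton 1)).union hNm, hEB, ?_⟩
    refine le_antisymm ?_ (measure_mono hEB)
    have hsub : f ⁻¹' {1} ∪ N ⊆ E ∪ N := by
      rintro x (hx | hx)
      · by_cases hxN : x ∈ N
        · exact Or.inr hxN
        · left
          have := hfe x hxN
          rw [mem_preimage, mem_singleton_iff] at hx
          rw [hx] at this
          by_contra hxE
          rw [indicator_of_notMem hxE] at this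
          norm_num at this
      · exact Or.inr hx
    calc μ (f ⁻¹' {1} ∪ N) ≤ μ (E ∪ N) := measure_mono hsub
      _ ≤ μ E + μ N := measure_union_le _ _
      _ = μ E := by rw [hNnull, add_zero]
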